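/- For every t ∈ (0,1) and every real number a, Σ_{F ⊆ E} t^{|F|}·(1−t)^{|E|−|F|}·a^{κ−r(F)} = (1−t)^{|E|}·(t/(1−t))^{κ}·T(1 + ((1−t)/t)·a, 1/(1−t)). In particular, the Laplace transform E[a^{β(X(t))}] of the (ℓ−1)-st reduced Betti number of the ℓ-Bernoulli cell complex with parameter t is expressed through the ℓ-Tutte polynomial. -/

import Mathlib

open Finset

/-- The Laplace transform `E[a^{β(X(t))}]` of the `(ℓ-1)`-st reduced Betti
number of the `ℓ`-Bernoulli cell complex with parameter `t` is expressed
through the `ℓ`-Tutte polynomial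
`T(x,y) = ∑_{F ⊆ E} (x-1)^{κ-r(F)} (y-1)^{|F|-r(F)}`. -/
theorem stmt_6 {K : Type*} [Field K] {E : Type*} [Fintype E] [DecidableEq E]
    {V : Type*} [AddCommGroup V] [Module K V] [FiniteDimensional K V]
    (bdry : (E → K) →ₗ[K] V)
    (r : Finset E → ℕ)
    (hr : ∀ F : Finset E, r F = Module.finrank K (Submodule.span K
      ((fun σ => bdry (Pi.single σ 1)) '' (F : Set E))))
    (κ : ℕ) (hκ : r Finset.univ ≤ κ)
    (T : ℝ → ℝ → ℝ)
    (hT : ∀ x y : ℝ, T x y =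
      ∑ F : Finset E, (x - 1) ^ (κ - r F) * (y - 1) ^ (F.card - r F))
    (t : ℝ) (ht : t ∈ Set.Ioo (0 : ℝ) 1) (a : ℝ) :
    ∑ F : Finset E,
        t ^ F.card * (1 - t) ^ (Fintype.card E - F.card) * a ^ (κ - r F) =
      (1 - t) ^ Fintype.card E * (t / (1 - t)) ^ κ *
        T (1 + (1 - t) / t * a) (1 / (1 - t)) := by
  obtain ⟨ht0, ht1⟩ := ht
  have h1t : (1 : ℝ) - t ≠ 0 := by linarith
  have ht0' : t ≠ 0 := ne_of_gt ht0
  rw [hT, Finset.mul_sum]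
  refine Finset.sum_congr rfl fun F _ => ?_
  -- key rank inequalities
  have hrle : ∀ G H : Finset E, G ⊆ H → r G ≤ r H := by
    intro G H hGH
    rw [hr, hr]
    exact Submodule.finrank_mono (Submodule.span_mono
      (Set.image_mono (by exact_mod_cast hGH)))
  have h1 : r F ≤ κ := le_trans (hrle F Finset.univ (Finset.subset_univ F)) hκ
  have h2 : r F ≤ F.card := by
    classical
    rw [hr, ← Finset.coe_image]
    exact le_trans (finrank_span_finset_le_card _) Finset.card_image_le
  have h3 : F.card ≤ Fintype.card E := Finset.card_le_univ F
  obtain ⟨k, hk⟩ := Nat.exists_eq_add_of_le h1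
  obtain ⟨m, hm⟩ := Nat.exists_eq_add_of_le h2
  obtain ⟨p, hp⟩ := Nat.exists_eq_add_of_le h3
  have e1 : (1 : ℝ) + (1 - t) / t * a - 1 = (1 - t) / t * a := by ring
  have e2 : 1 / (1 - t) - 1 = t / (1 - t) := by field_simp; ring
  rw [e1, e2]
  have eκ : κ - r F = k := by omega
  have ec : F.card - r F = m := by omega
  have en : Fintype.card E - F.card = p := by omega
  rw [eκ, ec, en, hk, hp, hm]
  field_simp
  simp only [mul_pow, pow_add]
  simp only [div_pow, mul_pow]
  field_simp
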